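/- Let (L_0, L_1) be an adaptive tester for the order A≺B, i.e. L_0, L_1 are positive semidefinite operators on A_I⊗A_O⊗B_I⊗B_O with tr_{B_O}(L_0 + L_1) = 1_{B_I} ⊗ J for some positive semidefinite J on A_I⊗A_O with tr_{A_O}(J) = 1_{A_I}. Define S_i := tr_{B_O}(L_i) ⊗ (1_{B_O}/dim B_O) for i = 0, 1. Then S_0 and S_1 are positive semidefinite, S_0 + S_1 ∈ NS, and for every operator of the form W = W' ⊗ 1_{B_O} with W' an operator on A_I⊗A_O⊗B_I one has tr(S_i W) = tr(tr_{B_O}(L_i) · W') for i = 0, 1. -/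

import Mathlib

open scoped ComplexOrder Matrix

namespace ProcessMatrices

/-- The trace norm (sum of singular values) of a complex square matrix. -/
noncomputable def traceNorm {n : Type} [Fintype n] [DecidableEq n] (X : Matrix n n ℂ) : ℝ :=
  ∑ i, Real.sqrt ((Matrix.posSemidef_conjTranspose_mul_self X).isHermitian.eigenvalues i)

variable {aI aO bI bO : Type} [Fintype aI] [Fintype aO] [Fintype bI] [Fintype bO]
  [DecidableEq aI] [DecidableEq aO] [DecidableEq bI] [DecidableEq bO]
  [Nonempty aI] [Nonempty aO] [Nonempty bI] [Nonempty bO]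

/-- `_{A_O} W = (1_{A_O}/dim A_O) ⊗ tr_{A_O} W`, as an operator on the full space. -/
noncomputable def rAO (W : Matrix (aI × aO × bI × bO) (aI × aO × bI × bO) ℂ) :
    Matrix (aI × aO × bI × bO) (aI × aO × bI × bO) ℂ := fun i j =>
  (if i.2.1 = j.2.1 then ((Fintype.card aO : ℂ))⁻¹ else 0) *
    ∑ k : aO, W (i.1, k, i.2.2.1, i.2.2.2) (j.1, k, j.2.2.1, j.2.2.2)

/-- `_{B_O} W`. -/
noncomputable def rBO (W : Matrix (aI × aO × bI × bO) (aI × aO × bI × bO) ℂ) :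
    Matrix (aI × aO × bI × bO) (aI × aO × bI × bO) ℂ := fun i j =>
  (if i.2.2.2 = j.2.2.2 then ((Fintype.card bO : ℂ))⁻¹ else 0) *
    ∑ k : bO, W (i.1, i.2.1, i.2.2.1, k) (j.1, j.2.1, j.2.2.1, k)

/-- `_{A_O B_O} W`. -/
noncomputable def rAOBO (W : Matrix (aI × aO × bI × bO) (aI × aO × bI × bO) ℂ) :
    Matrix (aI × aO × bI × bO) (aI × aO × bI × bO) ℂ := fun i j =>
  (if i.2.1 = j.2.1 ∧ i.2.2.2 = j.2.2.2 then
      ((Fintype.card aO : ℂ) * (Fintype.card bO : ℂ))⁻¹ else 0) *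
    ∑ k : aO, ∑ l : bO, W (i.1, k, i.2.2.1, l) (j.1, k, j.2.2.1, l)

/-- `_{A_I A_O} W`. -/
noncomputable def rAIAO (W : Matrix (aI × aO × bI × bO) (aI × aO × bI × bO) ℂ) :
    Matrix (aI × aO × bI × bO) (aI × aO × bI × bO) ℂ := fun i j =>
  (if i.1 = j.1 ∧ i.2.1 = j.2.1 then
      ((Fintype.card aI : ℂ) * (Fintype.card aO : ℂ))⁻¹ else 0) *
    ∑ k : aI, ∑ l : aO, W (k, l, i.2.2.1, i.2.2.2) (k, l, j.2.2.1, j.2.2.2)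

/-- `_{B_I B_O} W`. -/
noncomputable def rBIBO (W : Matrix (aI × aO × bI × bO) (aI × aO × bI × bO) ℂ) :
    Matrix (aI × aO × bI × bO) (aI × aO × bI × bO) ℂ := fun i j =>
  (if i.2.2.1 = j.2.2.1 ∧ i.2.2.2 = j.2.2.2 then
      ((Fintype.card bI : ℂ) * (Fintype.card bO : ℂ))⁻¹ else 0) *
    ∑ k : bI, ∑ l : bO, W (i.1, i.2.1, k, l) (j.1, j.2.1, k, l)

/-- `_{A_I A_O B_O} W`. -/
noncomputable def rAIAOBO (W : Matrix (aI × aO × bI × bO) (aI × aO × bI × bO) ℂ) :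
    Matrix (aI × aO × bI × bO) (aI × aO × bI × bO) ℂ := fun i j =>
  (if i.1 = j.1 ∧ i.2.1 = j.2.1 ∧ i.2.2.2 = j.2.2.2 then
      ((Fintype.card aI : ℂ) * (Fintype.card aO : ℂ) * (Fintype.card bO : ℂ))⁻¹ else 0) *
    ∑ k : aI, ∑ l : aO, ∑ m : bO, W (k, l, i.2.2.1, m) (k, l, j.2.2.1, m)

/-- `_{A_O B_I B_O} W`. -/
noncomputable def rAOBIBO (W : Matrix (aI × aO × bI × bO) (aI × aO × bI × bO) ℂ) :
    Matrix (aI × aO × bI × bO) (aI × aO × bI × bO) ℂ := fun i j =>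
  (if i.2.1 = j.2.1 ∧ i.2.2.1 = j.2.2.1 ∧ i.2.2.2 = j.2.2.2 then
      ((Fintype.card aO : ℂ) * (Fintype.card bI : ℂ) * (Fintype.card bO : ℂ))⁻¹ else 0) *
    ∑ k : aO, ∑ l : bI, ∑ m : bO, W (i.1, k, l, m) (j.1, k, l, m)

/-- `W` is a process matrix. -/
structure IsProcessMatrix (W : Matrix (aI × aO × bI × bO) (aI × aO × bI × bO) ℂ) : Prop where
  posSemidef : W.PosSemidef
  condA : rAIAO W = rAIAOBO W
  condB : rBIBO W = rAOBIBO W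
  condAB : W = rBO W + rAO W - rAOBO W
  traceEq : W.trace = (Fintype.card aO : ℂ) * (Fintype.card bO : ℂ)

/-- Partial trace over `A_O`. -/
noncomputable def ptrAO (N : Matrix (aI × aO × bI × bO) (aI × aO × bI × bO) ℂ) :
    Matrix (aI × bI × bO) (aI × bI × bO) ℂ := fun i j =>
  ∑ k : aO, N (i.1, k, i.2.1, i.2.2) (j.1, k, j.2.1, j.2.2)

/-- Partial trace over `B_O`. -/
noncomputable def ptrBO (N : Matrix (aI × aO × bI × bO) (aI × aO × bI × bO) ℂ) :
    Matrix (aI × aO × bI) (aI × aO × bI) ℂ := fun i j =>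
  ∑ k : bO, N (i.1, i.2.1, i.2.2, k) (j.1, j.2.1, j.2.2, k)

/-- Partial trace over `A_O ⊗ B_O`. -/
noncomputable def ptrAOBO (N : Matrix (aI × aO × bI × bO) (aI × aO × bI × bO) ℂ) :
    Matrix (aI × bI) (aI × bI) ℂ := fun i j =>
  ∑ k : aO, ∑ l : bO, N (i.1, k, i.2, l) (j.1, k, j.2, l)

/-- `N` is the Choi matrix of a non-signaling channel. -/
structure MemNS (N : Matrix (aI × aO × bI × bO) (aI × aO × bI × bO) ℂ) : Prop where
  posSemidef : N.PosSemidef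
  trChannel : ptrAOBO N = 1
  nsA : ∀ i j : aI × bI × bO, ptrAO N i j =
    (if i.1 = j.1 then ((Fintype.card aI : ℂ))⁻¹ else 0) *
      ∑ m : aI, ptrAO N (m, i.2.1, i.2.2) (m, j.2.1, j.2.2)
  nsB : ∀ i j : aI × aO × bI, ptrBO N i j =
    (if i.2.2 = j.2.2 then ((Fintype.card bI : ℂ))⁻¹ else 0) *
      ∑ m : bI, ptrBO N (i.1, i.2.1, m) (j.1, j.2.1, m)

/-- The positive semidefinite square root (the former `Matrix.PosSemidef.sqrt`). -/
noncomputable def posSemidefSqrt {n : Type} [Fintype n] [DecidableEq n] {A : Matrix n n ℂ}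
    (hA : A.PosSemidef) : Matrix n n ℂ :=
  (hA.1.eigenvectorUnitary : Matrix n n ℂ) * Matrix.diagonal ((↑) ∘ (√·) ∘ hA.1.eigenvalues) *
    (star hA.1.eigenvectorUnitary : Matrix n n ℂ)

/-- `sup { ‖√N (W₀ - W₁) √N‖₁ : N ∈ NS }`. -/
noncomputable def discrBound (W0 W1 : Matrix (aI × aO × bI × bO) (aI × aO × bI × bO) ℂ) : ℝ :=
  sSup { x : ℝ | ∃ N : Matrix (aI × aO × bI × bO) (aI × aO × bI × bO) ℂ, ∃ hN : MemNS N,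
    x = traceNorm (posSemidefSqrt hN.posSemidef * (W0 - W1) * posSemidefSqrt hN.posSemidef) }

/-- The optimal probability of discriminating the process matrices `W0` and `W1`
over non-signaling strategies. -/
noncomputable def pSucc (W0 W1 : Matrix (aI × aO × bI × bO) (aI × aO × bI × bO) ℂ) : ℝ :=
  (1/2) * sSup { x : ℝ | ∃ S0 S1 : Matrix (aI × aO × bI × bO) (aI × aO × bI × bO) ℂ,
    S0.PosSemidef ∧ S1.PosSemidef ∧ MemNS (S0 + S1) ∧
    x = ((W0 * S0).trace + (W1 * S1).trace).re }

/-- `W` is a process matrix representing a quantum comb with causal order `A ≺ B`: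
`W = W' ⊗ 1_{B_O}` with `tr_{B_I} W' = W'' ⊗ 1_{A_O}`. -/
def MemCombAB (W : Matrix (aI × aO × bI × bO) (aI × aO × bI × bO) ℂ) : Prop :=
  IsProcessMatrix W ∧
  ∃ W' : Matrix (aI × aO × bI) (aI × aO × bI) ℂ,
    (∀ i j, W i j = (if i.2.2.2 = j.2.2.2 then 1 else 0) *
        W' (i.1, i.2.1, i.2.2.1) (j.1, j.2.1, j.2.2.1)) ∧
    ∃ W'' : Matrix aI aI ℂ, ∀ p q : aI × aO,
      (∑ k : bI, W' (p.1, p.2, k) (q.1, q.2, k)) = (if p.2 = q.2 then 1 else 0) * W'' p.1 q.1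

/-- `W` is a process matrix representing a quantum comb with causal order `B ≺ A`:
`W = W' ⊗ 1_{A_O}` (in the `A_O` slot) with `tr_{A_I} W' = W'' ⊗ 1_{B_O}`. -/
def MemCombBA (W : Matrix (aI × aO × bI × bO) (aI × aO × bI × bO) ℂ) : Prop :=
  IsProcessMatrix W ∧
  ∃ W' : Matrix (aI × bI × bO) (aI × bI × bO) ℂ,
    (∀ i j, W i j = (if i.2.1 = j.2.1 then 1 else 0) *
        W' (i.1, i.2.2.1, i.2.2.2) (j.1, j.2.2.1, j.2.2.2)) ∧
    ∃ W'' : Matrix bI bI ℂ, ∀ p q : bI × bO,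
      (∑ k : aI, W' (k, p.1, p.2) (k, q.1, q.2)) = (if p.2 = q.2 then 1 else 0) * W'' p.1 q.1

/-- `W` is a free process matrix: `W = ρ ⊗ 1_{A_O ⊗ B_O}` for a density operator `ρ`. -/
def MemFree (W : Matrix (aI × aO × bI × bO) (aI × aO × bI × bO) ℂ) : Prop :=
  ∃ ρ : Matrix (aI × bI) (aI × bI) ℂ, ρ.PosSemidef ∧ ρ.trace = 1 ∧
    ∀ i j, W i j = (if i.2.1 = j.2.1 ∧ i.2.2.2 = j.2.2.2 then 1 else 0) *
      ρ (i.1, i.2.2.1) (j.1, j.2.2.1)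

/-- `W` is a causally separable process matrix. -/
def MemSep (W : Matrix (aI × aO × bI × bO) (aI × aO × bI × bO) ℂ) : Prop :=
  ∃ p : ℝ, 0 ≤ p ∧ p ≤ 1 ∧ ∃ W1 W2 : Matrix (aI × aO × bI × bO) (aI × aO × bI × bO) ℂ,
    MemCombAB W1 ∧ MemCombBA W2 ∧ W = (p : ℂ) • W1 + ((1 - p : ℝ) : ℂ) • W2

/-- `(L0, L1)` is an adaptive tester for the causal order `A ≺ B`. -/
structure IsAdaptiveTester (L0 L1 : Matrix (aI × aO × bI × bO) (aI × aO × bI × bO) ℂ) :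
    Prop where
  posSemidef0 : L0.PosSemidef
  posSemidef1 : L1.PosSemidef
  comb : ∃ J : Matrix (aI × aO) (aI × aO) ℂ, J.PosSemidef ∧
    (∀ p q : aI, (∑ k : aO, J (p, k) (q, k)) = if p = q then 1 else 0) ∧
    ∀ i j : aI × aO × bI, ptrBO (L0 + L1) i j =
      (if i.2.2 = j.2.2 then 1 else 0) * J (i.1, i.2.1) (j.1, j.2.1)

/-- The optimal probability of discriminating `W0` and `W1` over adaptive testers. -/
noncomputable def pAdapt (W0 W1 : Matrix (aI × aO × bI × bO) (aI × aO × bI × bO) ℂ) : ℝ :=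
  (1/2) * sSup { x : ℝ | ∃ L0 L1 : Matrix (aI × aO × bI × bO) (aI × aO × bI × bO) ℂ,
    IsAdaptiveTester L0 L1 ∧ x = ((W0 * L0).trace + (W1 * L1).trace).re }



section Aux

lemma aux_star_ite (c : Prop) [Decidable c] (a b : ℂ) :
    star (if c then a else b) = if c then star a else star b := apply_ite star c a b

lemma aux_sum_ite_const {i : Type} [Fintype i] (c : Prop) [Decidable c] (f : i → ℂ) :
    (∑ x : i, if c then f x else 0) = if c then ∑ x : i, f x else 0 := by split <;> simp

omit [DecidableEq aI] [DecidableEq aO] [DecidableEq bI] [DecidableEq bO]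
  [Nonempty aI] [Nonempty aO] [Nonempty bI] [Nonempty bO] in
lemma aux_sum_split (g : aI × aO × bI × bO → ℂ) :
    ∑ p : aI × aO × bI × bO, g p = ∑ p : aI × aO × bI, ∑ k : bO, g (p.1, p.2.1, p.2.2, k) := by
  simp [Fintype.sum_prod_type]

lemma aux_psd_add {n : Type} [Fintype n] {A B : Matrix n n ℂ}
    (hA : A.PosSemidef) (hB : B.PosSemidef) : (A + B).PosSemidef :=
  Matrix.posSemidef_iff_dotProduct_mulVec.mpr ⟨hA.1.add hB.1, fun x => by
    rw [Matrix.add_mulVec, dotProduct_add]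
    exact add_nonneg (hA.dotProduct_mulVec_nonneg x) (hB.dotProduct_mulVec_nonneg x)⟩

omit [Nonempty aI] [Nonempty aO] [Nonempty bI] [Nonempty bO] in
lemma aux_ptrBO_posSemidef {L : Matrix (aI × aO × bI × bO) (aI × aO × bI × bO) ℂ}
    (hL : L.PosSemidef) : (ptrBO L).PosSemidef := by
  rw [Matrix.posSemidef_iff_dotProduct_mulVec]
  constructor
  · ext i j
    simp only [Matrix.conjTranspose_apply, ptrBO, star_sum]
    exact Finset.sum_congr rfl fun k _ => hL.1.apply _ _
  · intro y
    have key : dotProduct (star y) (ptrBO L *ᵥ y) =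
        ∑ k : bO, dotProduct
          (star (fun p : aI × aO × bI × bO => if p.2.2.2 = k then y (p.1,p.2.1,p.2.2.1) else 0))
          (L *ᵥ (fun p : aI × aO × bI × bO => if p.2.2.2 = k then y (p.1,p.2.1,p.2.2.1) else 0)) := by
      have lhs : dotProduct (star y) (ptrBO L *ᵥ y) =
          ∑ k : bO, ∑ i : aI × aO × bI, ∑ j : aI × aO × bI,
            star (y i) * (L (i.1,i.2.1,i.2.2,k) (j.1,j.2.1,j.2.2,k) * y j) := by
        simp only [dotProduct, Matrix.mulVec, ptrBO, Pi.star_apply,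
          Finset.sum_mul, Finset.mul_sum]
        rw [show (∑ i : aI × aO × bI, ∑ j : aI × aO × bI, ∑ k : bO,
            star (y i) * (L (i.1,i.2.1,i.2.2,k) (j.1,j.2.1,j.2.2,k) * y j))
          = ∑ i : aI × aO × bI, ∑ k : bO, ∑ j : aI × aO × bI,
            star (y i) * (L (i.1,i.2.1,i.2.2,k) (j.1,j.2.1,j.2.2,k) * y j)
          from Finset.sum_congr rfl fun i _ => Finset.sum_comm, Finset.sum_comm]
      rw [lhs]
      refine Finset.sum_congr rfl fun k _ => ?_
      simp only [dotProduct, Matrix.mulVec, Pi.star_apply, aux_star_ite, star_zero,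
        aux_sum_split, ite_mul, zero_mul, mul_ite, mul_zero,
        Finset.sum_ite_eq', Finset.mem_univ, if_true, Finset.mul_sum, Prod.mk.eta,
        aux_sum_ite_const]
    rw [key]
    exact Finset.sum_nonneg fun k _ => hL.dotProduct_mulVec_nonneg _

omit [Nonempty aI] [Nonempty aO] [Nonempty bI] in
lemma aux_tensor_psd {M : Matrix (aI × aO × bI) (aI × aO × bI) ℂ} (hM : M.PosSemidef)
    {S : Matrix (aI × aO × bI × bO) (aI × aO × bI × bO) ℂ}
    (hS : ∀ i j, S i j = (if i.2.2.2 = j.2.2.2 then ((Fintype.card bO : ℂ))⁻¹ else 0) *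
        M (i.1,i.2.1,i.2.2.1) (j.1,j.2.1,j.2.2.1)) : S.PosSemidef := by
  rw [Matrix.posSemidef_iff_dotProduct_mulVec]
  constructor
  · ext i j
    rw [Matrix.conjTranspose_apply, hS, hS]
    simp only [star_mul', aux_star_ite, star_zero, star_inv₀, star_natCast, hM.1.apply]
    congr 1
    exact if_congr eq_comm rfl rfl
  · intro x
    have key : dotProduct (star x) (S *ᵥ x) = ((Fintype.card bO : ℂ))⁻¹ *
        ∑ k : bO, dotProduct
          (star (fun a : aI × aO × bI => x (a.1,a.2.1,a.2.2,k)))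
          (M *ᵥ (fun a : aI × aO × bI => x (a.1,a.2.1,a.2.2,k))) := by
      simp only [dotProduct, Matrix.mulVec, Pi.star_apply, hS, aux_sum_split,
        ite_mul, zero_mul, mul_ite, mul_zero, Finset.sum_ite_eq, Finset.mem_univ, if_true,
        Finset.mul_sum]
      conv_lhs => rw [Finset.sum_comm]
      refine Finset.sum_congr rfl fun k _ => Finset.sum_congr rfl fun i _ =>
        Finset.sum_congr rfl fun j _ => ?_
      simp only [Prod.mk.eta]
      ring
    rw [key]
    have hd : (0 : ℂ) ≤ ((Fintype.card bO : ℂ))⁻¹ := by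
      rw [← Complex.ofReal_natCast, ← Complex.ofReal_inv]
      exact_mod_cast inv_nonneg.mpr (Nat.cast_nonneg _)
    exact mul_nonneg hd (Finset.sum_nonneg fun k _ => hM.dotProduct_mulVec_nonneg _)

lemma aux_trace_tensor {M : Matrix (aI × aO × bI) (aI × aO × bI) ℂ}
    {S : Matrix (aI × aO × bI × bO) (aI × aO × bI × bO) ℂ}
    (hS : ∀ i j, S i j = (if i.2.2.2 = j.2.2.2 then ((Fintype.card bO : ℂ))⁻¹ else 0) *
        M (i.1,i.2.1,i.2.2.1) (j.1,j.2.1,j.2.2.1))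
    {W' : Matrix (aI × aO × bI) (aI × aO × bI) ℂ}
    {W : Matrix (aI × aO × bI × bO) (aI × aO × bI × bO) ℂ}
    (hW : ∀ i j, W i j = (if i.2.2.2 = j.2.2.2 then 1 else 0) *
        W' (i.1, i.2.1, i.2.2.1) (j.1, j.2.1, j.2.2.1)) :
    (S * W).trace = (M * W').trace := by
  have hd : ((Fintype.card bO : ℂ)) ≠ 0 :=
    Nat.cast_ne_zero.mpr Fintype.card_ne_zero
  simp only [Matrix.trace, Matrix.diag, Matrix.mul_apply, hS, hW, aux_sum_split,
    ite_mul, zero_mul, mul_ite, mul_zero, Finset.sum_ite_eq, Finset.sum_ite_eq',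
    Finset.mem_univ, if_true, eq_self_iff_true, Prod.mk.eta]
  refine Finset.sum_congr rfl fun i _ => ?_
  rw [Finset.sum_comm]
  refine Finset.sum_congr rfl fun j _ => ?_
  rw [Finset.sum_const, Finset.card_univ, nsmul_eq_mul]
  field_simp

end Aux

/-- From an adaptive tester `(L0, L1)` for the order `A ≺ B`, the
operators `Sᵢ := tr_{B_O}(Lᵢ) ⊗ 1_{B_O}/dim B_O` form a valid non-signaling
discrimination strategy, and `tr(Sᵢ · (W' ⊗ 1_{B_O})) = tr(tr_{B_O}(Lᵢ) · W')`. -/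
theorem statement5 {aI aO bI bO : Type}
    [Fintype aI] [Fintype aO] [Fintype bI] [Fintype bO]
    [DecidableEq aI] [DecidableEq aO] [DecidableEq bI] [DecidableEq bO]
    [Nonempty aI] [Nonempty aO] [Nonempty bI] [Nonempty bO]
    (L0 L1 : Matrix (aI × aO × bI × bO) (aI × aO × bI × bO) ℂ)
    (h : IsAdaptiveTester L0 L1)
    (S0 S1 : Matrix (aI × aO × bI × bO) (aI × aO × bI × bO) ℂ)
    (hS0 : ∀ i j, S0 i j = (if i.2.2.2 = j.2.2.2 then ((Fintype.card bO : ℂ))⁻¹ else 0) *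
        ptrBO L0 (i.1, i.2.1, i.2.2.1) (j.1, j.2.1, j.2.2.1))
    (hS1 : ∀ i j, S1 i j = (if i.2.2.2 = j.2.2.2 then ((Fintype.card bO : ℂ))⁻¹ else 0) *
        ptrBO L1 (i.1, i.2.1, i.2.2.1) (j.1, j.2.1, j.2.2.1)) :
    S0.PosSemidef ∧ S1.PosSemidef ∧ MemNS (S0 + S1) ∧
    ∀ (W' : Matrix (aI × aO × bI) (aI × aO × bI) ℂ)
      (W : Matrix (aI × aO × bI × bO) (aI × aO × bI × bO) ℂ),
      (∀ i j, W i j = (if i.2.2.2 = j.2.2.2 then 1 else 0) *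
          W' (i.1, i.2.1, i.2.2.1) (j.1, j.2.1, j.2.2.1)) →
      (S0 * W).trace = (ptrBO L0 * W').trace ∧ (S1 * W).trace = (ptrBO L1 * W').trace := by
  obtain ⟨J, hJpsd, hJtr, hJcomb⟩ := h.comb
  have hd : ((Fintype.card bO : ℂ)) ≠ 0 := Nat.cast_ne_zero.mpr Fintype.card_ne_zero
  have hcA : ((Fintype.card aI : ℂ)) ≠ 0 := Nat.cast_ne_zero.mpr Fintype.card_ne_zero
  have hcB : ((Fintype.card bI : ℂ)) ≠ 0 := Nat.cast_ne_zero.mpr Fintype.card_ne_zero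
  have hS0psd : S0.PosSemidef := aux_tensor_psd (aux_ptrBO_posSemidef h.posSemidef0) hS0
  have hS1psd : S1.PosSemidef := aux_tensor_psd (aux_ptrBO_posSemidef h.posSemidef1) hS1
  have hM : ∀ p q : aI × aO × bI, ptrBO L0 p q + ptrBO L1 p q =
      (if p.2.2 = q.2.2 then 1 else 0) * J (p.1, p.2.1) (q.1, q.2.1) := by
    intro p q
    have := hJcomb p q
    simpa [ptrBO, Matrix.add_apply, Finset.sum_add_distrib] using this
  have hSsum : ∀ i j : aI × aO × bI × bO, (S0 + S1) i j =
      (if i.2.2.2 = j.2.2.2 then ((Fintype.card bO : ℂ))⁻¹ else 0) *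
        ((if i.2.2.1 = j.2.2.1 then 1 else 0) * J (i.1, i.2.1) (j.1, j.2.1)) := by
    intro i j
    rw [Matrix.add_apply, hS0, hS1, ← mul_add, hM (i.1,i.2.1,i.2.2.1) (j.1,j.2.1,j.2.2.1)]
  have hAOBO : ∀ (i1 j1 : aI) (i2 j2 : bI), ptrAOBO (S0 + S1) (i1,i2) (j1,j2) =
      (if i2 = j2 then 1 else 0) * (if i1 = j1 then 1 else 0) := by
    intro i1 j1 i2 j2
    calc ptrAOBO (S0 + S1) (i1,i2) (j1,j2)
        = ∑ k : aO, ∑ l : bO, ((Fintype.card bO : ℂ))⁻¹ *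
            ((if i2 = j2 then 1 else 0) * J (i1,k) (j1,k)) := by
          simp only [ptrAOBO]
          exact Finset.sum_congr rfl fun k _ => Finset.sum_congr rfl fun l _ => by
            rw [hSsum]; simp
      _ = ∑ k : aO, (if i2 = j2 then 1 else 0) * J (i1,k) (j1,k) := by
          refine Finset.sum_congr rfl fun k _ => ?_
          rw [Finset.sum_const, Finset.card_univ, nsmul_eq_mul, ← mul_assoc,
            mul_inv_cancel₀ hd, one_mul]
      _ = (if i2 = j2 then 1 else 0) * ∑ k : aO, J (i1,k) (j1,k) := by
          rw [Finset.mul_sum]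
      _ = _ := by rw [hJtr]
  have hAO : ∀ i j : aI × bI × bO, ptrAO (S0 + S1) i j =
      (if i.2.2 = j.2.2 then ((Fintype.card bO : ℂ))⁻¹ else 0) *
        ((if i.2.1 = j.2.1 then 1 else 0) * (if i.1 = j.1 then 1 else 0)) := by
    intro i j
    calc ptrAO (S0 + S1) i j
        = ∑ k : aO, (if i.2.2 = j.2.2 then ((Fintype.card bO : ℂ))⁻¹ else 0) *
            ((if i.2.1 = j.2.1 then 1 else 0) * J (i.1,k) (j.1,k)) := by
          simp only [ptrAO]
          exact Finset.sum_congr rfl fun k _ => by rw [hSsum]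
      _ = (if i.2.2 = j.2.2 then ((Fintype.card bO : ℂ))⁻¹ else 0) *
            ((if i.2.1 = j.2.1 then 1 else 0) * ∑ k : aO, J (i.1,k) (j.1,k)) := by
          rw [Finset.mul_sum, Finset.mul_sum]
      _ = _ := by rw [hJtr]
  have hBO : ∀ p q : aI × aO × bI, ptrBO (S0 + S1) p q =
      (if p.2.2 = q.2.2 then 1 else 0) * J (p.1, p.2.1) (q.1, q.2.1) := by
    intro p q
    calc ptrBO (S0 + S1) p q
        = ∑ k : bO, ((Fintype.card bO : ℂ))⁻¹ *
            ((if p.2.2 = q.2.2 then 1 else 0) * J (p.1,p.2.1) (q.1,q.2.1)) := by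
          simp only [ptrBO]
          exact Finset.sum_congr rfl fun k _ => by rw [hSsum]; simp
      _ = _ := by
          rw [Finset.sum_const, Finset.card_univ, nsmul_eq_mul, ← mul_assoc,
            mul_inv_cancel₀ hd, one_mul]
  refine ⟨hS0psd, hS1psd, ⟨aux_psd_add hS0psd hS1psd, ?_, ?_, ?_⟩, ?_⟩
  · ext ⟨i1, i2⟩ ⟨j1, j2⟩
    rw [hAOBO]
    by_cases h1 : i1 = j1 <;> by_cases h2 : i2 = j2 <;>
      simp [h1, h2, Matrix.one_apply, Prod.ext_iff]
  · intro i j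
    simp only [hAO]
    by_cases h1 : i.1 = j.1 <;> by_cases h2 : i.2.1 = j.2.1 <;> by_cases h3 : i.2.2 = j.2.2 <;>
      simp [h1, h2, h3, Finset.sum_const, Finset.card_univ, nsmul_eq_mul, ← mul_assoc,
        inv_mul_cancel₀ hcA]
  · intro i j
    simp only [hBO]
    by_cases h3 : i.2.2 = j.2.2 <;>
      simp [h3, Finset.sum_const, Finset.card_univ, nsmul_eq_mul, ← mul_assoc,
        inv_mul_cancel₀ hcB]
  · intro W' W hW
    exact ⟨aux_trace_tensor hS0 hW, aux_trace_tensor hS1 hW⟩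

end ProcessMatrices
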